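/- arXiv:2001.10498 — 4 statements merged into one kernel-verified Lean document; each statement's English description precedes it below -/
import Mathlib

section
/- Let T be a tree with n ≥ 3 vertices such that no two vertices of degree 2 are adjacent and no leaf is adjacent to a vertex of degree 2. Then T has at least (n+5)/3 leaves. -/
private lemma walk_closed {V : Type*} {G : SimpleGraph V} (S : Set V)
    (h : ∀ a ∈ S, ∀ b, G.Adj a b → b ∈ S) {a b : V} (p : G.Walk a b) (ha : a ∈ S) :
    b ∈ S := by
  induction p with
  | nil => exact ha
  | cons hadj p ih => exact ih (h _ ha _ hadj)

/-- Let `T` be a tree with `n ≥ 3` vertices such that no two vertices of degree 2 are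
adjacent and no leaf is adjacent to a vertex of degree 2. Then `T` has at least
`(n+5)/3` leaves, i.e. `3ℓ ≥ n + 5`. -/
theorem tree_many_leaves {V : Type*} [Fintype V] [DecidableEq V]
    (G : SimpleGraph V) [DecidableRel G.Adj] (hT : G.IsTree)
    (n : ℕ) (hn : Fintype.card V = n) (h3 : 3 ≤ n)
    (h22 : ∀ v w, G.Adj v w → G.degree v = 2 → G.degree w ≠ 2)
    (h12 : ∀ v w, G.Adj v w → G.degree v = 1 → G.degree w ≠ 2) :
    n + 5 ≤ 3 * (Finset.univ.filter (fun v => G.degree v = 1)).card := by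
  classical
  -- minimum degree ≥ 1
  have hdeg1 : ∀ v : V, 0 < G.degree v := by
    intro v
    rw [G.degree_pos_iff_exists_adj]
    have : 1 < Fintype.card V := by omega
    obtain ⟨u, hu⟩ := Fintype.exists_ne_of_one_lt_card this v
    obtain ⟨p⟩ := hT.isConnected.preconnected v u
    cases p with
    | nil => exact absurd rfl hu
    | cons h _ => exact ⟨_, h⟩
  -- unique neighbor of a leaf
  have huniq : ∀ v w u : V, G.degree v = 1 → G.Adj v w → G.Adj v u → u = w := by
    intro v w u hv hw hu
    exact Finset.card_le_one.mp (le_of_eq hv)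
      _ (G.mem_neighborFinset v u |>.mpr hu) _ (G.mem_neighborFinset v w |>.mpr hw)
  -- no two leaves are adjacent
  have noLL : ∀ v w, G.Adj v w → G.degree v = 1 → G.degree w ≠ 1 := by
    intro v w hadj hv hw
    have hcl : ∀ a ∈ ({v, w} : Set V), ∀ b, G.Adj a b → b ∈ ({v, w} : Set V) := by
      rintro a (rfl | rfl) b hb
      · right; exact huniq a w b hv hadj hb
      · left; exact huniq a v b hw hadj.symm hb
    have hall : ∀ b : V, b ∈ ({v, w} : Set V) := fun b =>
      walk_closed _ hcl (hT.isConnected.preconnected v b).some (by left; rfl)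
    have hsub : (Finset.univ : Finset V) ⊆ {v, w} := by
      intro b _
      have := hall b
      simp only [Set.mem_insert_iff, Set.mem_singleton_iff] at this
      simp [Finset.mem_insert, this]
    have hle := Finset.card_le_card hsub
    have h2 : ({v, w} : Finset V).card ≤ 2 :=
      (Finset.card_insert_le _ _).trans (by simp)
    rw [Finset.card_univ, hn] at hle
    omega
  set L := Finset.univ.filter (fun v => G.degree v = 1) with hL
  set D2 := Finset.univ.filter (fun v => G.degree v = 2) with hD2
  set D3 := Finset.univ.filter (fun v => 3 ≤ G.degree v) with hD3
  have hdisj12 : Disjoint L D2 := by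
    rw [Finset.disjoint_left]
    intro a ha hb
    rw [hL, Finset.mem_filter] at ha
    rw [hD2, Finset.mem_filter] at hb
    omega
  have hdisj3 : Disjoint (L ∪ D2) D3 := by
    rw [Finset.disjoint_left]
    intro a ha hb
    rw [Finset.mem_union, hL, hD2, Finset.mem_filter, Finset.mem_filter] at ha
    rw [hD3, Finset.mem_filter] at hb
    omega
  have hcover : L ∪ D2 ∪ D3 = Finset.univ := by
    ext v
    simp only [Finset.mem_union, hL, hD2, hD3, Finset.mem_filter, Finset.mem_univ,
      true_and, iff_true]
    have := hdeg1 v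
    omega
  have hpart : L.card + D2.card + D3.card = n := by
    rw [← Finset.card_union_of_disjoint hdisj12, ← Finset.card_union_of_disjoint hdisj3,
      hcover, Finset.card_univ, hn]
  -- degree sum
  have hsum : ∑ v : V, G.degree v = 2 * (n - 1) := by
    rw [SimpleGraph.sum_degrees_eq_twice_card_edges]
    have := hT.card_edgeFinset
    omega
  have hsplit : ∑ v : V, G.degree v
      = ∑ v ∈ L, G.degree v + ∑ v ∈ D2, G.degree v + ∑ v ∈ D3, G.degree v := by
    rw [← Finset.sum_union hdisj12, ← Finset.sum_union hdisj3, hcover]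
  have hsL : ∑ v ∈ L, G.degree v = L.card := by
    rw [Finset.sum_congr rfl (fun v hv => (Finset.mem_filter.mp hv).2),
      Finset.sum_const, smul_eq_mul, mul_one]
  have hsD2 : ∑ v ∈ D2, G.degree v = 2 * D2.card := by
    rw [Finset.sum_congr rfl (fun v hv => (Finset.mem_filter.mp hv).2),
      Finset.sum_const, smul_eq_mul, mul_comm]
  have hsD3 : 3 * D3.card ≤ ∑ v ∈ D3, G.degree v := by
    rw [mul_comm]
    exact Finset.card_nsmul_le_sum D3 _ 3 (fun v hv => (Finset.mem_filter.mp hv).2)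
  have hineq1 : L.card + 2 * D2.card + 3 * D3.card ≤ 2 * (n - 1) := by
    rw [← hsum, hsplit, hsL, hsD2]
    omega
  -- independence of L ∪ D2
  have hindep : ∀ v ∈ L ∪ D2, ∀ w ∈ L ∪ D2, ¬ G.Adj v w := by
    intro v hv w hw hadj
    rw [Finset.mem_union, hL, hD2, Finset.mem_filter, Finset.mem_filter] at hv hw
    rcases hv with ⟨_, hv⟩ | ⟨_, hv⟩ <;> rcases hw with ⟨_, hw⟩ | ⟨_, hw⟩
    · exact noLL v w hadj hv hw
    · exact h12 v w hadj hv hw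
    · exact h12 w v hadj.symm hw hv
    · exact h22 v w hadj hv hw
  -- counting edges incident to L ∪ D2
  have hcount : ∑ v ∈ L ∪ D2, G.degree v ≤ n - 1 := by
    have hcard : ∑ v ∈ L ∪ D2, G.degree v
        = ((L ∪ D2).sigma (fun v => G.neighborFinset v)).card := by
      rw [Finset.card_sigma]
      rfl
    rw [hcard]
    have hle : ((L ∪ D2).sigma (fun v => G.neighborFinset v)).card
        ≤ G.edgeFinset.card := by
      apply Finset.card_le_card_of_injOn (fun p => s(p.1, p.2))
      · intro p hp
        rw [Finset.mem_coe, Finset.mem_sigma] at hp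
        rw [Finset.mem_coe, SimpleGraph.mem_edgeFinset]
        exact (G.mem_neighborFinset _ _).mp hp.2
      · intro p hp q hq heq
        rw [Finset.mem_coe, Finset.mem_sigma] at hp hq
        rw [Sym2.eq_iff] at heq
        rcases heq with ⟨h1, h2⟩ | ⟨h1, h2⟩
        · exact Sigma.ext h1 (heq_of_eq h2)
        · exfalso
          have hA := (G.mem_neighborFinset _ _).mp hp.2
          rw [h2] at hA
          exact hindep p.1 hp.1 q.1 hq.1 hA
    have hE := hT.card_edgeFinset
    omega
  rw [Finset.sum_union hdisj12, hsL, hsD2] at hcount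
  omega
end

section
/- Let T be a tree with n ≥ 3 vertices such that no two vertices of degree 2 are adjacent and no leaf is adjacent to a vertex of degree 2. Then the sum of the degrees of the vertices of degree at least 3 is at least n − 1, i.e. Σ_{v : deg(v) ≥ 3} deg(v) ≥ n − 1. -/
/-- If `a` and `b` are adjacent leaves, every walk starting at `a` or `b` stays in `{a,b}`. -/
lemma walk_stuck {V : Type*} [Fintype V] [DecidableEq V]
    (G : SimpleGraph V) [DecidableRel G.Adj] {a b : V} (hab : G.Adj a b)
    (ha : G.degree a = 1) (hb : G.degree b = 1) :
    ∀ {x y : V} (_ : G.Walk x y), x = a ∨ x = b → y = a ∨ y = b := by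
  have hna : G.neighborFinset a = {b} := by
    apply Finset.eq_singleton_iff_unique_mem.2
    refine ⟨by simpa using hab, ?_⟩
    intro z hz
    have : (G.neighborFinset a).card = 1 := by simpa [G.card_neighborFinset_eq_degree] using ha
    obtain ⟨c, hc⟩ := Finset.card_eq_one.1 this
    rw [hc] at hz
    have hbmem : b ∈ ({c} : Finset V) := by rw [← hc]; simpa using hab
    simp_all
  have hnb : G.neighborFinset b = {a} := by
    apply Finset.eq_singleton_iff_unique_mem.2
    refine ⟨by simpa using hab.symm, ?_⟩
    intro z hz
    have : (G.neighborFinset b).card = 1 := by simpa [G.card_neighborFinset_eq_degree] using hb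
    obtain ⟨c, hc⟩ := Finset.card_eq_one.1 this
    rw [hc] at hz
    have hamem : a ∈ ({c} : Finset V) := by rw [← hc]; simpa using hab.symm
    simp_all
  intro x y w
  induction w with
  | nil => exact id
  | cons h p ih =>
    rename_i u v z
    intro hx
    apply ih
    rcases hx with rfl | rfl
    · have : v ∈ G.neighborFinset u := by simpa using h
      rw [hna] at this; right; simpa using this
    · have : v ∈ G.neighborFinset u := by simpa using h
      rw [hnb] at this; left; simpa using this

/-- Let `T` be a tree with `n ≥ 3` vertices such that no two vertices of degree 2 are
adjacent and no leaf is adjacent to a vertex of degree 2. Then the sum of the degrees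
of the vertices of degree at least `3` is at least `n − 1`. -/
theorem tree_high_degree_sum {V : Type*} [Fintype V] [DecidableEq V]
    (G : SimpleGraph V) [DecidableRel G.Adj] (hT : G.IsTree)
    (n : ℕ) (hn : Fintype.card V = n) (h3 : 3 ≤ n)
    (h22 : ∀ v w, G.Adj v w → G.degree v = 2 → G.degree w ≠ 2)
    (h12 : ∀ v w, G.Adj v w → G.degree v = 1 → G.degree w ≠ 2) :
    n - 1 ≤ ∑ v ∈ Finset.univ.filter (fun v => 3 ≤ G.degree v), G.degree v := by
  classical
  -- Key: every edge has an endpoint of degree ≥ 3.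
  have hkey : ∀ a b : V, G.Adj a b → 3 ≤ G.degree a ∨ 3 ≤ G.degree b := by
    intro a b hab
    by_contra hc
    push_neg at hc
    obtain ⟨ha, hb⟩ := hc
    have ha1 : 0 < G.degree a := G.degree_pos_iff_exists_adj a |>.2 ⟨b, hab⟩
    have hb1 : 0 < G.degree b := G.degree_pos_iff_exists_adj b |>.2 ⟨a, hab.symm⟩
    interval_cases h1 : G.degree a <;> interval_cases h2 : G.degree b
    · -- both leaves: contradicts n ≥ 3 with connectivity
      have hcard : ({a, b} : Finset V).card < Fintype.card V := by
        calc ({a, b} : Finset V).card ≤ 2 := Finset.card_insert_le _ _ |>.trans (by simp)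
        _ < n := by omega
        _ = Fintype.card V := hn.symm
      have hex : ∃ c, c ∉ ({a, b} : Finset V) := by
        by_contra hno
        push_neg at hno
        have : (Finset.univ : Finset V) ⊆ {a, b} := fun c _ => hno c
        have := Finset.card_le_card this
        simp only [Finset.card_univ] at this
        omega
      obtain ⟨c, hcmem⟩ := hex
      simp only [Finset.mem_insert, Finset.mem_singleton, not_or] at hcmem
      have hreach := (hT.isConnected.preconnected a c).some
      have := walk_stuck G hab h1 h2 hreach (Or.inl rfl)
      tauto
    · exact h12 a b hab h1 h2
    · exact h12 b a hab.symm h2 h1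
    · exact h22 a b hab h1 h2
  -- counting
  have hsub : G.edgeFinset ⊆
      (Finset.univ.filter (fun v => 3 ≤ G.degree v)).biUnion (fun v => G.incidenceFinset v) := by
    intro e he
    induction e with
    | h x y =>
      have hadj : G.Adj x y := by simpa [SimpleGraph.mem_edgeFinset] using he
      rcases hkey x y hadj with h | h
      · exact Finset.mem_biUnion.2 ⟨x, by simp [h],
          (G.mem_incidenceFinset _ _).2 ⟨G.mem_edgeSet.2 hadj, by simp⟩⟩
      · exact Finset.mem_biUnion.2 ⟨y, by simp [h],
          (G.mem_incidenceFinset _ _).2 ⟨G.mem_edgeSet.2 hadj, by simp⟩⟩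
  have hcount : G.edgeFinset.card ≤
      ∑ v ∈ Finset.univ.filter (fun v => 3 ≤ G.degree v), G.degree v := by
    calc G.edgeFinset.card
        ≤ ((Finset.univ.filter (fun v => 3 ≤ G.degree v)).biUnion
            (fun v => G.incidenceFinset v)).card := Finset.card_le_card hsub
      _ ≤ ∑ v ∈ Finset.univ.filter (fun v => 3 ≤ G.degree v), (G.incidenceFinset v).card :=
          Finset.card_biUnion_le
      _ = ∑ v ∈ Finset.univ.filter (fun v => 3 ≤ G.degree v), G.degree v := by
          simp [SimpleGraph.card_incidenceFinset_eq_degree]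
  have htree := hT.card_edgeFinset
  omega
end

section
/- Let F be a forest with D ≥ 1 connected components, each of which has at least 3 vertices, and suppose that in F no two vertices of degree 2 are adjacent and no leaf is adjacent to a vertex of degree 2. Then 3·ℓ ≥ n + 5D, where n is the number of vertices of F and ℓ is the number of leaves of F. -/
open Finset

set_option linter.unusedSectionVars false
namespace ForestAux

variable {V : Type*} [Fintype V] [DecidableEq V]

lemma induce_isAcyclic (G : SimpleGraph V) (hF : G.IsAcyclic) (s : Set V) :
    (G.induce s).IsAcyclic := by
  intro v p hp
  exact hF (p.map (SimpleGraph.Embedding.induce s).toHom)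
    (hp.map Subtype.val_injective)

lemma reachable_induce_of_walk (G : SimpleGraph V) (c : G.ConnectedComponent) :
    ∀ {v w : V} (_ : G.Walk v w) (hv : v ∈ c.supp) (hw : w ∈ c.supp),
      (G.induce c.supp).Reachable ⟨v, hv⟩ ⟨w, hw⟩ := by
  intro v w p
  induction p with
  | nil => intro hv hw; rfl
  | @cons v x w h q ih =>
    intro hv hw
    have hx : x ∈ c.supp := by
      rw [SimpleGraph.ConnectedComponent.mem_supp_iff] at hv ⊢
      rw [← hv]
      exact SimpleGraph.ConnectedComponent.sound h.symm.reachable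
    have hadj : (G.induce c.supp).Adj ⟨v, hv⟩ ⟨x, hx⟩ := by
      simpa using h
    exact hadj.reachable.trans (ih hx hw)

lemma induce_supp_connected (G : SimpleGraph V) (c : G.ConnectedComponent) :
    (G.induce c.supp).Connected := by
  obtain ⟨v, hv⟩ := c.exists_rep
  have hvmem : v ∈ c.supp := by
    rw [SimpleGraph.ConnectedComponent.mem_supp_iff]; exact hv
  haveI : Nonempty ↥c.supp := ⟨⟨v, hvmem⟩⟩
  constructor
  rintro ⟨x, hx⟩ ⟨y, hy⟩
  have hr : G.Reachable x y := by
    rw [SimpleGraph.ConnectedComponent.mem_supp_iff] at hx hy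
    exact SimpleGraph.ConnectedComponent.exact (hx.trans hy.symm)
  obtain ⟨p⟩ := hr
  exact reachable_induce_of_walk G c p hx hy

instance instDecRelInduce (G : SimpleGraph V) [DecidableRel G.Adj] (s : Set V) :
    DecidableRel (G.induce s).Adj :=
  fun a b => decidable_of_iff (G.Adj a b) (by simp)

lemma degree_induce_supp (G : SimpleGraph V) [DecidableRel G.Adj] (c : G.ConnectedComponent)
    (v : c.supp) :
    (G.induce c.supp).degree v = G.degree ↑v := by
  rw [SimpleGraph.degree, SimpleGraph.degree]
  refine Finset.card_bij (fun w _ => (w : V)) ?_ ?_ ?_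
  · intro a ha
    rw [SimpleGraph.mem_neighborFinset] at ha ⊢
    simpa using ha
  · intro a _ b _ h
    exact Subtype.ext h
  · intro b hb
    rw [SimpleGraph.mem_neighborFinset] at hb
    have hbs : b ∈ c.supp := by
      rw [SimpleGraph.ConnectedComponent.mem_supp_iff]
      have := v.2
      rw [SimpleGraph.ConnectedComponent.mem_supp_iff] at this
      rw [← this]
      exact SimpleGraph.ConnectedComponent.sound hb.symm.reachable
    refine ⟨⟨b, hbs⟩, ?_, rfl⟩
    rw [SimpleGraph.mem_neighborFinset]
    simpa using hb

lemma comp_deg_sum (G : SimpleGraph V) [DecidableRel G.Adj] (hF : G.IsAcyclic)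
    (c : G.ConnectedComponent) :
    (∑ v ∈ Finset.univ.filter (fun v => v ∈ c.supp), G.degree v) + 2
      = 2 * (Finset.univ.filter (fun v => v ∈ c.supp)).card := by
  have htree : (G.induce c.supp).IsTree :=
    ⟨induce_supp_connected G c, induce_isAcyclic G hF _⟩
  have h1 := htree.card_edgeFinset
  have h2 := (G.induce c.supp).sum_degrees_eq_twice_card_edges
  have h3 : ∑ v : c.supp, (G.induce c.supp).degree v = ∑ v : c.supp, G.degree ↑v :=
    Finset.sum_congr rfl (fun v _ => degree_induce_supp G c v)
  have h4 : (∑ v ∈ Finset.univ.filter (fun v => v ∈ c.supp), G.degree v)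
      = ∑ v : c.supp, G.degree ↑v :=
    Finset.sum_subtype _ (by simp) _
  have h5 : (Finset.univ.filter (fun v => v ∈ c.supp)).card = Fintype.card c.supp :=
    (Fintype.card_subtype _).symm
  rw [h4, h5, ← h3, h2]
  omega

instance instDecEqCC (G : SimpleGraph V) [DecidableRel G.Adj] :
    DecidableEq G.ConnectedComponent :=
  @Quotient.decidableEq _ G.reachableSetoid
    (fun a b => inferInstanceAs (Decidable (G.Reachable a b)))

lemma total_deg_sum (G : SimpleGraph V) [DecidableRel G.Adj] (hF : G.IsAcyclic) :
    (∑ v : V, G.degree v) + 2 * Fintype.card G.ConnectedComponent = 2 * Fintype.card V := by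
  have hfil : ∀ c : G.ConnectedComponent,
      Finset.univ.filter (fun v => v ∈ c.supp)
        = Finset.univ.filter (fun v => G.connectedComponentMk v = c) :=
    fun c => Finset.filter_congr (fun x _ => SimpleGraph.ConnectedComponent.mem_supp_iff c x)
  have e1 := Finset.sum_fiberwise Finset.univ (fun v => G.connectedComponentMk v)
    (fun v => G.degree v)
  have e2 := Finset.card_eq_sum_card_fiberwise
    (f := fun v => G.connectedComponentMk v) (s := Finset.univ) (t := Finset.univ)
    (fun _ _ => Finset.mem_univ _)
  have e3 : ∀ c : G.ConnectedComponent,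
      (∑ v ∈ Finset.univ.filter (fun v => G.connectedComponentMk v = c), G.degree v) + 2
        = 2 * (Finset.univ.filter (fun v => G.connectedComponentMk v = c)).card := by
    intro c
    rw [← hfil c]
    exact comp_deg_sum G hF c
  calc (∑ v : V, G.degree v) + 2 * Fintype.card G.ConnectedComponent
      = ∑ c : G.ConnectedComponent,
          ((∑ v ∈ Finset.univ.filter (fun v => G.connectedComponentMk v = c), G.degree v) + 2) := by
        rw [Finset.sum_add_distrib, e1, Finset.sum_const, Finset.card_univ, smul_eq_mul, mul_comm]
    _ = ∑ c : G.ConnectedComponent,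
          2 * (Finset.univ.filter (fun v => G.connectedComponentMk v = c)).card :=
        Finset.sum_congr rfl (fun c _ => e3 c)
    _ = 2 * Fintype.card V := by
        rw [← Finset.mul_sum, ← Finset.card_univ, e2]

end ForestAux


/-- Let `F` be a forest with `D ≥ 1` connected components, each with at least `3`
vertices, in which no two vertices of degree 2 are adjacent and no leaf is adjacent to
a vertex of degree 2. Then `3ℓ ≥ n + 5D`, where `n` is the number of vertices and `ℓ`
the number of leaves. -/
theorem forest_many_leaves {V : Type*} [Fintype V] [DecidableEq V]
    (G : SimpleGraph V) [DecidableRel G.Adj] (hF : G.IsAcyclic)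
    (D n l : ℕ)
    (hD : Nat.card G.ConnectedComponent = D) (hD1 : 1 ≤ D)
    (hn : Fintype.card V = n)
    (hl : (Finset.univ.filter (fun v => G.degree v = 1)).card = l)
    (hcomp : ∀ c : G.ConnectedComponent, 3 ≤ Nat.card c.supp)
    (h22 : ∀ v w, G.Adj v w → G.degree v = 2 → G.degree w ≠ 2)
    (h12 : ∀ v w, G.Adj v w → G.degree v = 1 → G.degree w ≠ 2) :
    n + 5 * D ≤ 3 * l := by
  subst hD hn hl
  set A := Finset.univ.filter (fun v => G.degree v = 1) with hA
  set B := Finset.univ.filter (fun v => G.degree v = 2) with hB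
  set C := Finset.univ.filter (fun v => 3 ≤ G.degree v) with hC
  -- minimum degree is 1
  have hpos : ∀ v : V, 1 ≤ G.degree v := by
    intro v
    by_contra hcon
    push_neg at hcon
    have hdeg0 : G.degree v = 0 := by omega
    have hsub : (G.connectedComponentMk v).supp ⊆ {v} := by
      intro w hw
      rw [SimpleGraph.ConnectedComponent.mem_supp_iff] at hw
      have hr : G.Reachable v w := (SimpleGraph.ConnectedComponent.exact hw).symm
      obtain ⟨p⟩ := hr
      cases p with
      | nil => exact rfl
      | cons h q =>
        exfalso
        have : 0 < G.degree v := by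
          rw [G.degree_pos_iff_exists_adj]; exact ⟨_, h⟩
        omega
    have h1 := hcomp (G.connectedComponentMk v)
    rw [Nat.card_coe_set_eq] at h1
    have h2 := Set.ncard_le_ncard hsub (Set.finite_singleton v)
    rw [Set.ncard_singleton] at h2
    omega
  -- unique neighbour of a leaf
  have huniq : ∀ v w y : V, G.degree v = 1 → G.Adj v w → G.Adj v y → y = w := by
    intro v w y hdeg hw hy
    have hwm : w ∈ G.neighborFinset v := by rwa [SimpleGraph.mem_neighborFinset]
    have hym : y ∈ G.neighborFinset v := by rwa [SimpleGraph.mem_neighborFinset]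
    have hcard : (G.neighborFinset v).card ≤ 1 := by
      rw [SimpleGraph.card_neighborFinset_eq_degree, hdeg]
    exact Finset.card_le_one.mp hcard _ hym _ hwm
  -- neighbours of leaves have degree ≥ 3
  have hleaf : ∀ v w : V, G.Adj v w → G.degree v = 1 → 3 ≤ G.degree w := by
    intro v w hvw hdv
    have h1 : 1 ≤ G.degree w := hpos w
    have h2 : G.degree w ≠ 2 := h12 v w hvw hdv
    rcases Nat.lt_or_ge (G.degree w) 3 with hlt | h
    · exfalso
      have hdw : G.degree w = 1 := by omega
      have key : ∀ {x u : V} (_ : G.Walk x u), (x = v ∨ x = w) → (u = v ∨ u = w) := by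
        intro x u p
        induction p with
        | nil => exact id
        | @cons a y u h q ih =>
          intro hx
          apply ih
          rcases hx with rfl | rfl
          · right; exact huniq a w y hdv hvw h
          · left; exact huniq a v y hdw hvw.symm h
      have hsub : (G.connectedComponentMk v).supp ⊆ {v, w} := by
        intro u hu
        rw [SimpleGraph.ConnectedComponent.mem_supp_iff] at hu
        obtain ⟨p⟩ := (SimpleGraph.ConnectedComponent.exact hu).symm
        rcases key p (Or.inl rfl) with h | h <;> simp [h]
      have h3 := hcomp (G.connectedComponentMk v)
      rw [Nat.card_coe_set_eq] at h3
      have h4 := Set.ncard_le_ncard hsub (Set.toFinite _)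
      have h5 : ({v, w} : Set V).ncard ≤ 2 := by
        refine le_trans (Set.ncard_insert_le _ _) ?_
        rw [Set.ncard_singleton]
      omega
    · exact h
  -- neighbours of degree-2 vertices have degree ≥ 3
  have h2deg : ∀ v w : V, G.Adj v w → G.degree v = 2 → 3 ≤ G.degree w := by
    intro v w hvw hdv
    have h1 : 1 ≤ G.degree w := hpos w
    have h2 : G.degree w ≠ 2 := h22 v w hvw hdv
    have h3 : G.degree w ≠ 1 := fun h => h12 w v hvw.symm h hdv
    omega
  -- total handshake with components
  have htot := ForestAux.total_deg_sum G hF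
  rw [← Nat.card_eq_fintype_card (α := G.ConnectedComponent)] at htot
  -- partition of vertices
  have hdAB : Disjoint A B := by
    rw [Finset.disjoint_filter]
    intro x _ h1 h2
    omega
  have hdABC : Disjoint (A ∪ B) C := by
    rw [Finset.disjoint_union_left]
    constructor <;>
      · rw [Finset.disjoint_filter]
        intro x _ h1 h2
        omega
  have hunion : A ∪ B ∪ C = Finset.univ := by
    ext v
    simp only [hA, hB, hC, Finset.mem_union, Finset.mem_filter, Finset.mem_univ, true_and,
      iff_true]
    have := hpos v
    omega
  have hcardsum : A.card + B.card + C.card = Fintype.card V := by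
    rw [← Finset.card_union_of_disjoint hdAB, ← Finset.card_union_of_disjoint hdABC, hunion,
      Finset.card_univ]
  have hsA : ∑ v ∈ A, G.degree v = A.card := by
    rw [Finset.card_eq_sum_ones]
    exact Finset.sum_congr rfl (fun v hv => (Finset.mem_filter.mp hv).2)
  have hsB : ∑ v ∈ B, G.degree v = 2 * B.card := by
    have : ∑ v ∈ B, G.degree v = ∑ _v ∈ B, 2 :=
      Finset.sum_congr rfl (fun v hv => (Finset.mem_filter.mp hv).2)
    rw [this, Finset.sum_const, smul_eq_mul, mul_comm]
  have hsC3 : 3 * C.card ≤ ∑ v ∈ C, G.degree v := by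
    rw [mul_comm, ← smul_eq_mul]
    exact Finset.card_nsmul_le_sum C _ _ (fun v hv => (Finset.mem_filter.mp hv).2)
  have hsplit : ∑ v : V, G.degree v
      = (∑ v ∈ A, G.degree v) + (∑ v ∈ B, G.degree v) + (∑ v ∈ C, G.degree v) := by
    rw [← Finset.sum_union hdAB, ← Finset.sum_union hdABC, hunion]
  -- double counting edges from low-degree vertices to C
  have hdc : A.card + 2 * B.card ≤ ∑ v ∈ C, G.degree v := by
    have step1 : ∀ v, ((A ∪ B).filter (fun w => G.Adj v w)).card ≤ G.degree v := by
      intro v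
      rw [← SimpleGraph.card_neighborFinset_eq_degree, SimpleGraph.neighborFinset_eq_filter]
      exact Finset.card_le_card (Finset.filter_subset_filter _ (Finset.subset_univ _))
    have step2 : ∑ w ∈ A ∪ B, (C.filter (fun v => G.Adj v w)).card
        = ∑ v ∈ C, ((A ∪ B).filter (fun w => G.Adj v w)).card := by
      simp_rw [Finset.card_filter]
      exact Finset.sum_comm
    have step3 : ∀ w ∈ A ∪ B, (C.filter (fun v => G.Adj v w)).card = G.degree w := by
      intro w hw
      have hdw : G.degree w = 1 ∨ G.degree w = 2 := by
        rw [Finset.mem_union, hA, hB, Finset.mem_filter, Finset.mem_filter] at hw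
        tauto
      have heq : C.filter (fun v => G.Adj v w) = G.neighborFinset w := by
        ext u
        rw [Finset.mem_filter, hC, Finset.mem_filter, SimpleGraph.mem_neighborFinset]
        constructor
        · rintro ⟨_, h⟩
          exact h.symm
        · intro h
          refine ⟨⟨Finset.mem_univ _, ?_⟩, h.symm⟩
          rcases hdw with hdw | hdw
          · exact hleaf w u h hdw
          · exact h2deg w u h hdw
      rw [heq, SimpleGraph.card_neighborFinset_eq_degree]
    calc A.card + 2 * B.card = ∑ w ∈ A ∪ B, G.degree w := by
          rw [Finset.sum_union hdAB, hsA, hsB]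
      _ = ∑ w ∈ A ∪ B, (C.filter (fun v => G.Adj v w)).card :=
          (Finset.sum_congr rfl step3).symm
      _ = ∑ v ∈ C, ((A ∪ B).filter (fun w => G.Adj v w)).card := step2
      _ ≤ ∑ v ∈ C, G.degree v := Finset.sum_le_sum (fun v _ => step1 v)
  omega
end

section
/- Let T be a tree with n ≥ 3 vertices and l leaves, and let C = {a_1b_1, …, a_kb_k} be a set of k edges of T. Call a vertex touched if it is a leaf of T or an endpoint of an edge of C. Suppose that: (i) no endpoint a_i or b_i is a leaf of T; (ii) the 2k endpoints a_1, …, a_k, b_1, …, b_k are pairwise distinct; (iii) no edge of T outside C has both endpoints touched; (iv) no vertex of degree 2 that is not an endpoint of an edge of C has a touched neighbour; (v) no two adjacent vertices of degree 2 are both non-endpoints of edges of C. Then n + 7 − 3k − 3l + Σ_{i=1}^{k} (deg(a_i) + deg(b_i) − 4) ≤ 2. -/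
/-- Let `T` be a tree with `n ≥ 3` vertices and `l` leaves, and let
`C = {a_1 b_1, …, a_k b_k}` be a set of `k` edges of `T`. A vertex is touched if it is a
leaf of `T` or an endpoint of an edge of `C`. Suppose: (i) no `a_i` or `b_i` is a leaf;
(ii) the `2k` endpoints are pairwise distinct; (iii) no edge of `T` outside `C` has both
endpoints touched; (iv) no vertex of degree 2 that is not an endpoint of an edge of `C`
has a touched neighbour; (v) no two adjacent vertices of degree 2 are both
non-endpoints of edges of `C`. Then
`n + 7 − 3k − 3l + Σ_i (deg(a_i) + deg(b_i) − 4) ≤ 2`. -/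
theorem tree_score_nonpositive {V : Type*} [Fintype V] [DecidableEq V]
    (G : SimpleGraph V) [DecidableRel G.Adj] (hT : G.IsTree)
    (n l k : ℕ) (hn : Fintype.card V = n) (h3 : 3 ≤ n)
    (hl : (Finset.univ.filter (fun v => G.degree v = 1)).card = l)
    (a b : Fin k → V) (hedge : ∀ i, G.Adj (a i) (b i))
    (hi : ∀ i, G.degree (a i) ≠ 1 ∧ G.degree (b i) ≠ 1)
    (hii : Function.Injective (Sum.elim a b))
    (hiii : ∀ u v, G.Adj u v →
      (G.degree u = 1 ∨ ∃ i, u = a i ∨ u = b i) →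
      (G.degree v = 1 ∨ ∃ i, v = a i ∨ v = b i) →
      ∃ i, (u = a i ∧ v = b i) ∨ (u = b i ∧ v = a i))
    (hiv : ∀ v, G.degree v = 2 → (¬ ∃ i, v = a i ∨ v = b i) →
      ∀ w, G.Adj v w → ¬ (G.degree w = 1 ∨ ∃ i, w = a i ∨ w = b i))
    (hv : ∀ v w, G.Adj v w → G.degree v = 2 → G.degree w = 2 →
      (¬ ∃ i, v = a i ∨ v = b i) → (¬ ∃ i, w = a i ∨ w = b i) → False) :
    (n : ℤ) + 7 - 3 * k - 3 * l
      + ∑ i, ((G.degree (a i) : ℤ) + (G.degree (b i) : ℤ) - 4) ≤ 2 := by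
  classical
  have hconn : G.Connected := hT.isConnected
  -- every vertex has positive degree
  have hdeg1 : ∀ v : V, 1 ≤ G.degree v := by
    intro v
    rw [Nat.one_le_iff_ne_zero, ← Nat.pos_iff_ne_zero, G.degree_pos_iff_exists_adj]
    have hcard : 1 < Fintype.card V := by omega
    obtain ⟨w, hw⟩ := Fintype.exists_ne_of_one_lt_card hcard v
    obtain ⟨p⟩ := hconn.preconnected v w
    cases p with
    | nil => exact absurd rfl hw
    | cons h _ => exact ⟨_, h⟩
  set Ep : V → Prop := fun v => ∃ i, v = a i ∨ v = b i with hEp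
  set L : Finset V := Finset.univ.filter (fun v => G.degree v = 1) with hL
  set Fe : Finset V := Finset.univ.filter Ep with hFe
  set Dd : Finset V := Finset.univ.filter (fun v => G.degree v = 2 ∧ ¬ Ep v) with hDd
  set Rr : Finset V := Finset.univ.filter
      (fun v => G.degree v ≠ 1 ∧ G.degree v ≠ 2 ∧ ¬ Ep v) with hRr
  have hEpNotLeaf : ∀ v, Ep v → G.degree v ≠ 1 := by
    rintro v ⟨i, hvi | hvi⟩ h1
    · exact (hi i).1 (hvi ▸ h1)
    · exact (hi i).2 (hvi ▸ h1)
  -- partition facts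
  have hdisLF : Disjoint L Fe := by
    rw [Finset.disjoint_left]
    intro v hvL hvF
    simp only [hL, hFe, Finset.mem_filter, Finset.mem_univ, true_and] at hvL hvF
    exact hEpNotLeaf v hvF hvL
  have hdisLD : Disjoint L Dd := by
    rw [Finset.disjoint_left]; intro v hvL hvD
    simp only [hL, hDd, Finset.mem_filter, Finset.mem_univ, true_and] at hvL hvD
    omega
  have hdisLR : Disjoint L Rr := by
    rw [Finset.disjoint_left]; intro v hvL hvR
    simp only [hL, hRr, Finset.mem_filter, Finset.mem_univ, true_and] at hvL hvR
    exact hvR.1 hvL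
  have hdisFD : Disjoint Fe Dd := by
    rw [Finset.disjoint_left]; intro v hvF hvD
    simp only [hFe, hDd, Finset.mem_filter, Finset.mem_univ, true_and] at hvF hvD
    exact hvD.2 hvF
  have hdisFR : Disjoint Fe Rr := by
    rw [Finset.disjoint_left]; intro v hvF hvR
    simp only [hFe, hRr, Finset.mem_filter, Finset.mem_univ, true_and] at hvF hvR
    exact hvR.2.2 hvF
  have hdisDR : Disjoint Dd Rr := by
    rw [Finset.disjoint_left]; intro v hvD hvR
    simp only [hDd, hRr, Finset.mem_filter, Finset.mem_univ, true_and] at hvD hvR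
    exact hvR.2.1 hvD.1
  have hunion : L ∪ Fe ∪ Dd ∪ Rr = Finset.univ := by
    ext v
    simp only [hL, hFe, hDd, hRr, Finset.mem_union, Finset.mem_filter, Finset.mem_univ,
      true_and, iff_true]
    by_cases h1 : G.degree v = 1
    · exact Or.inl (Or.inl (Or.inl h1))
    by_cases hE : Ep v
    · exact Or.inl (Or.inl (Or.inr hE))
    by_cases h2 : G.degree v = 2
    · exact Or.inl (Or.inr ⟨h2, hE⟩)
    · exact Or.inr ⟨h1, h2, hE⟩
  -- Fe as image
  have hFeImage : Fe = Finset.image (Sum.elim a b) Finset.univ := by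
    ext v
    simp only [hFe, Finset.mem_filter, Finset.mem_univ, true_and, Finset.mem_image, hEp]
    constructor
    · rintro ⟨i, h | h⟩
      · exact ⟨Sum.inl i, h.symm⟩
      · exact ⟨Sum.inr i, h.symm⟩
    · rintro ⟨s, hs⟩
      cases s with
      | inl i => exact ⟨i, Or.inl hs.symm⟩
      | inr i => exact ⟨i, Or.inr hs.symm⟩
  have hFecard : Fe.card = 2 * k := by
    rw [hFeImage, Finset.card_image_of_injective _ hii]
    simp [two_mul]
  set S : ℕ := ∑ i, (G.degree (a i) + G.degree (b i)) with hS
  have hFesum : ∑ v ∈ Fe, G.degree v = S := by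
    rw [hFeImage, Finset.sum_image (fun x _ y _ h => hii h)]
    rw [Fintype.sum_sum_type]
    simp [hS, Finset.sum_add_distrib]
    rfl
  have hLsum : ∑ v ∈ L, G.degree v = l := by
    rw [← hl]
    rw [Finset.card_eq_sum_ones]
    apply Finset.sum_congr rfl
    intro v hv
    simp only [hL, Finset.mem_filter] at hv
    exact hv.2
  have hDdsum : ∑ v ∈ Dd, G.degree v = 2 * Dd.card := by
    rw [Finset.card_eq_sum_ones, Finset.mul_sum]
    apply Finset.sum_congr rfl
    intro v hv
    simp only [hDd, Finset.mem_filter] at hv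
    simp [hv.2.1]
  -- neighbour lemmas
  have hLnbr : ∀ v ∈ L, ∀ w, G.Adj v w → w ∈ Rr := by
    intro v hvL w hadj
    simp only [hL, Finset.mem_filter, Finset.mem_univ, true_and] at hvL
    simp only [hRr, Finset.mem_filter, Finset.mem_univ, true_and]
    by_cases hwt : G.degree w = 1 ∨ Ep w
    · obtain ⟨i, hcase⟩ := hiii v w hadj (Or.inl hvL) hwt
      exfalso
      rcases hcase with ⟨h1, _⟩ | ⟨h1, _⟩
      · exact (hi i).1 (h1 ▸ hvL)
      · exact (hi i).2 (h1 ▸ hvL)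
    push_neg at hwt
    refine ⟨hwt.1, ?_, hwt.2⟩
    intro h2
    exact hiv w h2 hwt.2 v hadj.symm (Or.inl hvL)
  have hDnbr : ∀ v ∈ Dd, ∀ w, G.Adj v w → w ∈ Rr := by
    intro v hvD w hadj
    simp only [hDd, Finset.mem_filter, Finset.mem_univ, true_and] at hvD
    simp only [hRr, Finset.mem_filter, Finset.mem_univ, true_and]
    by_cases hwt : G.degree w = 1 ∨ Ep w
    · exact absurd hwt (hiv v hvD.1 hvD.2 w hadj)
    push_neg at hwt
    refine ⟨hwt.1, ?_, hwt.2⟩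
    intro h2
    exact hv v w hadj hvD.1 h2 hvD.2 hwt.2
  have hhelp : ∀ i j, a i ≠ b j := by
    intro i j h
    have := hii (a₁ := Sum.inl i) (a₂ := Sum.inr j) h
    simp at this
  have hEnbr : ∀ v ∈ Fe, ∃ p : V, ∀ w, G.Adj v w → w ≠ p → w ∈ Rr := by
    intro v hvF
    simp only [hFe, Finset.mem_filter, Finset.mem_univ, true_and, hEp] at hvF
    obtain ⟨i, hvi⟩ := hvF
    refine ⟨if v = a i then b i else a i, ?_⟩
    intro w hadj hwp
    simp only [hRr, Finset.mem_filter, Finset.mem_univ, true_and]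
    by_cases hwt : G.degree w = 1 ∨ Ep w
    · exfalso
      obtain ⟨j, hcase⟩ := hiii v w hadj (Or.inr ⟨i, hvi⟩) hwt
      rcases hvi with hvi | hvi
      · rw [if_pos hvi] at hwp
        rcases hcase with ⟨h1, h2⟩ | ⟨h1, h2⟩
        · have : i = j := by
            have := hii (a₁ := Sum.inl i) (a₂ := Sum.inl j) (by simpa using hvi ▸ h1)
            simpa using this
          exact hwp (h2.trans (congrArg b this.symm))
        · exact hhelp i j (hvi ▸ h1)
      · rw [if_neg (fun h => hhelp i i (h.symm.trans hvi))] at hwp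
        rcases hcase with ⟨h1, h2⟩ | ⟨h1, h2⟩
        · exact hhelp j i (h1.symm.trans hvi)
        · have : i = j := by
            have := hii (a₁ := Sum.inr i) (a₂ := Sum.inr j) (by simpa using hvi ▸ h1)
            simpa using this
          exact hwp (h2.trans (congrArg a this.symm))
    push_neg at hwt
    refine ⟨hwt.1, ?_, hwt.2⟩
    intro h2
    exact hiv w h2 hwt.2 v hadj.symm (Or.inr ⟨i, hvi⟩)
  -- double counting: sum of degrees over Rr
  set t : ℕ := ∑ v ∈ Rr, G.degree v with ht
  set g : V → ℕ := fun w => (Rr.filter (fun v => G.Adj w v)).card with hg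
  have htg : t = ∑ w, g w := by
    rw [ht]
    have : ∀ v, G.degree v = ∑ w, if G.Adj v w then 1 else 0 := by
      intro v
      rw [← SimpleGraph.card_neighborFinset_eq_degree, SimpleGraph.neighborFinset_eq_filter,
        Finset.card_filter]
    simp_rw [this]
    rw [Finset.sum_comm]
    apply Finset.sum_congr rfl
    intro w _
    rw [hg]
    simp only [Finset.card_filter]
    apply Finset.sum_congr rfl
    intro v _
    simp [SimpleGraph.adj_comm]
  have hgL : ∀ w ∈ L, g w = 1 := by
    intro w hwL
    have : Rr.filter (fun v => G.Adj w v) = Finset.univ.filter (fun v => G.Adj w v) := by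
      ext u
      simp only [Finset.mem_filter, Finset.mem_univ, true_and]
      exact ⟨fun h => h.2, fun h => ⟨hLnbr w hwL u h, h⟩⟩
    rw [hg]
    simp only [this]
    rw [← SimpleGraph.neighborFinset_eq_filter, SimpleGraph.card_neighborFinset_eq_degree]
    simp only [hL, Finset.mem_filter] at hwL
    exact hwL.2
  have hgD : ∀ w ∈ Dd, g w = 2 := by
    intro w hwD
    have : Rr.filter (fun v => G.Adj w v) = Finset.univ.filter (fun v => G.Adj w v) := by
      ext u
      simp only [Finset.mem_filter, Finset.mem_univ, true_and]
      exact ⟨fun h => h.2, fun h => ⟨hDnbr w hwD u h, h⟩⟩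
    rw [hg]
    simp only [this]
    rw [← SimpleGraph.neighborFinset_eq_filter, SimpleGraph.card_neighborFinset_eq_degree]
    simp only [hDd, Finset.mem_filter] at hwD
    exact hwD.2.1
  have hgF : ∀ w ∈ Fe, G.degree w ≤ g w + 1 := by
    intro w hwF
    obtain ⟨p, hp⟩ := hEnbr w hwF
    have hsub : (Finset.univ.filter (fun v => G.Adj w v)) \ {p}
        ⊆ Rr.filter (fun v => G.Adj w v) := by
      intro u hu
      simp only [Finset.mem_sdiff, Finset.mem_filter, Finset.mem_univ, true_and,
        Finset.mem_singleton] at hu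
      exact Finset.mem_filter.2 ⟨hp u hu.1 hu.2, hu.1⟩
    have hcard := Finset.card_le_card hsub
    have hdegeq : G.degree w = (Finset.univ.filter (fun v => G.Adj w v)).card := by
      rw [← SimpleGraph.neighborFinset_eq_filter, SimpleGraph.card_neighborFinset_eq_degree]
    have hsd : (Finset.univ.filter (fun v => G.Adj w v)).card ≤
        ((Finset.univ.filter (fun v => G.Adj w v)) \ {p}).card + 1 := by
      have := Finset.card_le_card_sdiff_add_card
        (s := Finset.univ.filter (fun v => G.Adj w v)) (t := {p})
      simpa using this
    simp only [hg]
    omega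
  -- main counting inequalities
  have hcardsplit : l + 2 * k + Dd.card + Rr.card = n := by
    have h1 : (L ∪ Fe ∪ Dd ∪ Rr).card = L.card + Fe.card + Dd.card + Rr.card := by
      rw [Finset.card_union_of_disjoint, Finset.card_union_of_disjoint,
        Finset.card_union_of_disjoint]
      · exact hdisLF
      · exact Finset.disjoint_union_left.2 ⟨hdisLD, hdisFD⟩
      · exact Finset.disjoint_union_left.2 ⟨Finset.disjoint_union_left.2 ⟨hdisLR, hdisFR⟩, hdisDR⟩
    rw [hunion] at h1
    rw [Finset.card_univ, hn] at h1
    rw [hl, hFecard] at h1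
    omega
  have hsumsplit : ∑ v, G.degree v = l + S + 2 * Dd.card + t := by
    have h1 : ∑ v ∈ (L ∪ Fe ∪ Dd ∪ Rr), G.degree v
        = ∑ v ∈ L, G.degree v + ∑ v ∈ Fe, G.degree v + ∑ v ∈ Dd, G.degree v
          + ∑ v ∈ Rr, G.degree v := by
      rw [Finset.sum_union, Finset.sum_union, Finset.sum_union]
      · exact hdisLF
      · exact Finset.disjoint_union_left.2 ⟨hdisLD, hdisFD⟩
      · exact Finset.disjoint_union_left.2 ⟨Finset.disjoint_union_left.2 ⟨hdisLR, hdisFR⟩, hdisDR⟩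
    rw [hunion] at h1
    rw [h1, hLsum, hFesum, hDdsum, ht]
  have hhandshake : ∑ v, G.degree v + 2 = 2 * n := by
    rw [G.sum_degrees_eq_twice_card_edges]
    have := hT.card_edgeFinset
    rw [hn] at this
    omega
  have hRdeg : 3 * Rr.card ≤ t := by
    rw [ht, Finset.card_eq_sum_ones, Finset.mul_sum]
    apply Finset.sum_le_sum
    intro v hvR
    simp only [hRr, Finset.mem_filter] at hvR
    have := hdeg1 v
    omega
  have hF5 : l + 2 * Dd.card + S ≤ t + 2 * k := by
    have hsub : L ∪ Fe ∪ Dd ⊆ Finset.univ := Finset.subset_univ _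
    have h1 : ∑ w ∈ (L ∪ Fe ∪ Dd), g w ≤ ∑ w, g w :=
      Finset.sum_le_sum_of_subset hsub
    have h2 : ∑ w ∈ (L ∪ Fe ∪ Dd), g w
        = ∑ w ∈ L, g w + ∑ w ∈ Fe, g w + ∑ w ∈ Dd, g w := by
      rw [Finset.sum_union, Finset.sum_union]
      · exact hdisLF
      · exact Finset.disjoint_union_left.2 ⟨hdisLD, hdisFD⟩
    have h3 : ∑ w ∈ L, g w = l := by
      rw [← hl, Finset.card_eq_sum_ones]
      exact Finset.sum_congr rfl hgL
    have h4 : ∑ w ∈ Dd, g w = 2 * Dd.card := by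
      rw [Finset.card_eq_sum_ones, Finset.mul_sum]
      apply Finset.sum_congr rfl
      intro w hw; simp [hgD w hw]
    have h5 : S ≤ ∑ w ∈ Fe, g w + 2 * k := by
      rw [← hFesum, ← hFecard, Finset.card_eq_sum_ones, ← Finset.sum_add_distrib]
      exact Finset.sum_le_sum hgF
    rw [← htg] at h1
    omega
  have hSk : 4 * k ≤ S := by
    rw [hS]
    calc 4 * k = ∑ _i : Fin k, 4 := by simp [Finset.sum_const, mul_comm]
    _ ≤ ∑ i, (G.degree (a i) + G.degree (b i)) := by
        apply Finset.sum_le_sum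
        intro i _
        have h1 := hdeg1 (a i)
        have h2 := hdeg1 (b i)
        have h3 := (hi i).1
        have h4 := (hi i).2
        omega
  -- conclude
  have hgoal : ∑ i, ((G.degree (a i) : ℤ) + (G.degree (b i) : ℤ) - 4) = (S : ℤ) - 4 * k := by
    rw [hS]
    push_cast
    rw [Finset.sum_sub_distrib, Finset.sum_add_distrib]
    simp [mul_comm]
  rw [hgoal]
  have c1 : (∑ v, G.degree v : ℤ) + 2 = 2 * n := by exact_mod_cast hhandshake
  have c2 : (l : ℤ) + 2 * k + Dd.card + Rr.card = n := by exact_mod_cast hcardsplit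
  have c3 : (∑ v, G.degree v : ℤ) = l + S + 2 * Dd.card + t := by exact_mod_cast hsumsplit
  have c4 : 3 * (Rr.card : ℤ) ≤ t := by exact_mod_cast hRdeg
  have c5 : (l : ℤ) + 2 * Dd.card + S ≤ t + 2 * k := by exact_mod_cast hF5
  have c6 : 4 * (k : ℤ) ≤ S := by exact_mod_cast hSk
  linarith
end
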